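/- Define Q(x, y, z) = xy - Σᵢ zᵢ² for x, y ∈ ℝ and z ∈ ℝⁿ. If (x₁, y₁, z₁) and (x₂, y₂, z₂) satisfy x₁ > 0, x₂ > 0, Q(x₁,y₁,z₁) = Q(x₂,y₂,z₂) > 0, then for every s ∈ [0,1], Q(s·(x₁,y₁,z₁) + (1-s)·(x₂,y₂,z₂)) ≥ Q(x₁,y₁,z₁). -/

import Mathlib

theorem Q_superlevel_convex (n : ℕ)
    (Q : ℝ → ℝ → (Fin n → ℝ) → ℝ)
    (hQ : ∀ x y z, Q x y z = x * y - ∑ i, (z i) ^ 2)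
    (x₁ y₁ x₂ y₂ : ℝ) (z₁ z₂ : Fin n → ℝ)
    (hx₁ : 0 < x₁) (hx₂ : 0 < x₂)
    (heq : Q x₁ y₁ z₁ = Q x₂ y₂ z₂)
    (hpos : 0 < Q x₁ y₁ z₁)
    (s : ℝ) (hs : s ∈ Set.Icc (0 : ℝ) 1) :
    Q x₁ y₁ z₁ ≤
      Q (s * x₁ + (1 - s) * x₂) (s * y₁ + (1 - s) * y₂)
        (fun i => s * z₁ i + (1 - s) * z₂ i) := by
  obtain ⟨hs0, hs1⟩ := hs
  simp only [hQ] at heq hpos ⊢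
  set a := ∑ i, z₁ i ^ 2 with ha
  set b := ∑ i, z₂ i ^ 2 with hb
  set d := ∑ i, z₁ i * z₂ i with hd
  have hsum : ∑ i, (s * z₁ i + (1 - s) * z₂ i) ^ 2
      = s ^ 2 * a + 2 * s * (1 - s) * d + (1 - s) ^ 2 * b := by
    rw [ha, hb, hd, Finset.mul_sum, Finset.mul_sum, Finset.mul_sum,
      ← Finset.sum_add_distrib, ← Finset.sum_add_distrib]
    exact Finset.sum_congr rfl fun i _ => by ring
  have hkey0 : (0:ℝ) ≤ ∑ i, (x₁ * z₂ i - x₂ * z₁ i) ^ 2 :=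
    Finset.sum_nonneg fun i _ => sq_nonneg _
  have hkey : x₁ ^ 2 * b - 2 * x₁ * x₂ * d + x₂ ^ 2 * a
      = ∑ i, (x₁ * z₂ i - x₂ * z₁ i) ^ 2 := by
    rw [ha, hb, hd, Finset.mul_sum, Finset.mul_sum, Finset.mul_sum,
      ← Finset.sum_sub_distrib, ← Finset.sum_add_distrib]
    exact Finset.sum_congr rfl fun i _ => by ring
  have hkey' : (0:ℝ) ≤ x₁ ^ 2 * b - 2 * x₁ * x₂ * d + x₂ ^ 2 * a := by
    rw [hkey]; exact hkey0
  have hx12 : 0 < x₁ * x₂ := mul_pos hx₁ hx₂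
  have hB : 2 * (x₁ * y₁ - a) ≤ x₁ * y₂ + x₂ * y₁ - 2 * d := by
    rw [← mul_le_mul_iff_of_pos_right hx12]
    nlinarith [sq_nonneg (x₁ - x₂), hkey', hpos, heq]
  have hss : 0 ≤ s * (1 - s) := mul_nonneg hs0 (by linarith)
  have := mul_nonneg hss (by linarith : (0:ℝ) ≤ x₁ * y₂ + x₂ * y₁ - 2 * d - 2 * (x₁ * y₁ - a))
  rw [hsum]
  nlinarith [this, heq]
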